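/- Let Q₁, Q₂ be Markov kernels on Θ, each satisfying the uniform ergodicity bound sup_{|h|≤1} sup_θ |Q_l^j h(θ) − π_l(h)| ≤ 2(1−ε₀)^j with invariant probabilities π₁, π₂, and suppose sup_{|h|≤1} sup_θ |(Q₁ − Q₂)h(θ)| ≤ δ. Then sup_{|h|≤1} |π₁(h) − π₂(h)| ≤ (2/ε₀)·δ, i.e. the total variation distance between the invariant measures is bounded by a constant multiple of the kernel distance. -/

import Mathlib

open MeasureTheory ProbabilityTheory

noncomputable def iterKernel {Θ : Type*} [MeasurableSpace Θ]
    (Q : Kernel Θ Θ) : ℕ → Kernel Θ Θ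
  | 0 => Kernel.id
  | n + 1 => Q ∘ₖ iterKernel Q n

section Aux

variable {Θ : Type*} [MeasurableSpace Θ]

lemma aux_integrable_of_bound {μ : Measure Θ} [IsFiniteMeasure μ] {f : Θ → ℝ}
    (hf : Measurable f) {C : ℝ} (hb : ∀ x, |f x| ≤ C) : Integrable f μ := by
  refine (integrable_const C).mono' hf.aestronglyMeasurable ?_
  exact Filter.Eventually.of_forall fun x => by simpa using hb x

lemma aux_abs_integral_le {μ : Measure Θ} [IsProbabilityMeasure μ] {f : Θ → ℝ}
    {C : ℝ} (hb : ∀ x, |f x| ≤ C) : |∫ x, f x ∂μ| ≤ C := by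
  have := norm_integral_le_of_norm_le_const (μ := μ) (f := f) (C := C)
    (Filter.Eventually.of_forall fun x => by simpa using hb x)
  simpa using this

lemma aux_measurable_kernel_integral (κ : Kernel Θ Θ) [IsSFiniteKernel κ]
    {f : Θ → ℝ} (hf : Measurable f) :
    Measurable fun θ => ∫ x, f x ∂(κ θ) := by
  have : StronglyMeasurable fun p : Θ × Θ => f p.2 :=
    (hf.comp measurable_snd).stronglyMeasurable
  exact this.integral_kernel_prod_right'.measurable

lemma aux_bind_eq_map_snd (μ : Measure Θ) [SFinite μ] (κ : Kernel Θ Θ)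
    [IsSFiniteKernel κ] :
    μ.bind (fun θ => κ θ) = (μ.compProd κ).map Prod.snd := by
  ext s hs
  rw [Measure.bind_apply hs (Kernel.measurable κ).aemeasurable,
    Measure.map_apply measurable_snd hs,
    Measure.compProd_apply (measurable_snd hs)]
  rfl

lemma aux_integral_bind (μ : Measure Θ) [IsProbabilityMeasure μ] (κ : Kernel Θ Θ)
    [IsMarkovKernel κ] {f : Θ → ℝ} (hf : Measurable f) {C : ℝ} (hb : ∀ x, |f x| ≤ C) :
    ∫ x, f x ∂(μ.bind (fun θ => κ θ)) = ∫ θ, ∫ x, f x ∂(κ θ) ∂μ := by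
  rw [aux_bind_eq_map_snd μ κ]
  rw [integral_map measurable_snd.aemeasurable hf.aestronglyMeasurable]
  have hint : Integrable (fun p : Θ × Θ => f p.2) (μ.compProd κ) :=
    aux_integrable_of_bound (hf.comp measurable_snd) (fun p => hb p.2)
  exact MeasureTheory.Measure.integral_compProd hint

lemma aux_isMarkov_iter (Q : Kernel Θ Θ) [IsMarkovKernel Q] :
    ∀ n, IsMarkovKernel (iterKernel Q n)
  | 0 => by rw [iterKernel]; infer_instance
  | n + 1 => by
    have := aux_isMarkov_iter Q n
    rw [iterKernel]; infer_instance

lemma aux_iter_succ' (Q : Kernel Θ Θ) [IsMarkovKernel Q] (n : ℕ) :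
    iterKernel Q (n + 1) = iterKernel Q n ∘ₖ Q := by
  induction n with
  | zero => simp [iterKernel, Kernel.comp_id, Kernel.id_comp]
  | succ n ih =>
    have : IsMarkovKernel (iterKernel Q n) := aux_isMarkov_iter Q n
    calc iterKernel Q (n + 2) = Q ∘ₖ iterKernel Q (n + 1) := rfl
      _ = Q ∘ₖ (iterKernel Q n ∘ₖ Q) := by rw [ih]
      _ = (Q ∘ₖ iterKernel Q n) ∘ₖ Q := (Kernel.comp_assoc Q (iterKernel Q n) Q).symm
      _ = iterKernel Q (n + 1) ∘ₖ Q := rfl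

end Aux

theorem invariant_measure_stability
    {Θ : Type*} [MeasurableSpace Θ] (Q₁ Q₂ : Kernel Θ Θ)
    [IsMarkovKernel Q₁] [IsMarkovKernel Q₂]
    (π₁ π₂ : Measure Θ) [IsProbabilityMeasure π₁] [IsProbabilityMeasure π₂]
    (hinv₁ : π₁.bind (fun θ => Q₁ θ) = π₁) (hinv₂ : π₂.bind (fun θ => Q₂ θ) = π₂)
    (ε₀ : ℝ) (hε₀ : ε₀ ∈ Set.Ioo (0 : ℝ) 1)
    (herg₁ : ∀ h : Θ → ℝ, Measurable h → (∀ θ, |h θ| ≤ 1) → ∀ j : ℕ, ∀ θ,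
      |(∫ x, h x ∂(iterKernel Q₁ j θ)) - ∫ x, h x ∂π₁| ≤ 2 * (1 - ε₀) ^ j)
    (herg₂ : ∀ h : Θ → ℝ, Measurable h → (∀ θ, |h θ| ≤ 1) → ∀ j : ℕ, ∀ θ,
      |(∫ x, h x ∂(iterKernel Q₂ j θ)) - ∫ x, h x ∂π₂| ≤ 2 * (1 - ε₀) ^ j)
    (δ : ℝ) (hδ : 0 ≤ δ)
    (hclose : ∀ h : Θ → ℝ, Measurable h → (∀ θ, |h θ| ≤ 1) → ∀ θ,
      |(∫ x, h x ∂(Q₁ θ)) - ∫ x, h x ∂(Q₂ θ)| ≤ δ) :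
    ∀ h : Θ → ℝ, Measurable h → (∀ θ, |h θ| ≤ 1) →
      |(∫ x, h x ∂π₁) - ∫ x, h x ∂π₂| ≤ (2 / ε₀) * δ := by
  obtain ⟨hε₀pos, hε₀lt⟩ := hε₀
  have hr0 : (0 : ℝ) ≤ 1 - ε₀ := by linarith
  have hr1 : 1 - ε₀ < 1 := by linarith
  intro h hm hb
  have hiterM : ∀ n, IsMarkovKernel (iterKernel Q₁ n) := aux_isMarkov_iter Q₁
  set c₁ : ℝ := ∫ x, h x ∂π₁ with hc₁
  set c₂ : ℝ := ∫ x, h x ∂π₂ with hc₂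
  -- the centered iterates
  set g : ℕ → Θ → ℝ := fun j θ => (∫ x, h x ∂(iterKernel Q₁ j θ)) - c₁ with hg
  have hgm : ∀ j, Measurable (g j) := fun j => by
    have := hiterM j
    exact (aux_measurable_kernel_integral (iterKernel Q₁ j) hm).sub measurable_const
  have hgb : ∀ j θ, |g j θ| ≤ 2 * (1 - ε₀) ^ j := fun j θ => herg₁ h hm hb j θ
  have hrpos : (0 : ℝ) < 1 - ε₀ := by linarith
  have hcpos : ∀ j : ℕ, (0 : ℝ) < 2 * (1 - ε₀) ^ j := by
    intro j; positivity
  -- one-step identity for Q₁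
  have hstep1 : ∀ j θ, ∫ x, g j x ∂(Q₁ θ) = g (j + 1) θ := by
    intro j θ
    have := hiterM j
    have hFm : Measurable fun x => ∫ y, h y ∂(iterKernel Q₁ j x) :=
      aux_measurable_kernel_integral (iterKernel Q₁ j) hm
    have hFb : ∀ x, |∫ y, h y ∂(iterKernel Q₁ j x)| ≤ 1 := fun x =>
      aux_abs_integral_le hb
    have hFint : Integrable (fun x => ∫ y, h y ∂(iterKernel Q₁ j x)) (Q₁ θ) :=
      aux_integrable_of_bound hFm hFb
    calc ∫ x, g j x ∂(Q₁ θ)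
        = (∫ x, (∫ y, h y ∂(iterKernel Q₁ j x)) ∂(Q₁ θ)) - c₁ := by
          rw [show (fun x => g j x) = fun x => (∫ y, h y ∂(iterKernel Q₁ j x)) - c₁ from rfl,
            integral_sub hFint (integrable_const c₁), integral_const]
          simp
      _ = (∫ y, h y ∂((Q₁ θ).bind (fun x => iterKernel Q₁ j x))) - c₁ := by
          rw [aux_integral_bind (Q₁ θ) (iterKernel Q₁ j) hm hb]
      _ = g (j + 1) θ := by
          show _ = (∫ x, h x ∂(iterKernel Q₁ (j + 1) θ)) - c₁
          rw [aux_iter_succ' Q₁ j, Kernel.comp_apply]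
  -- closeness transfers with the geometric factor
  have key1 : ∀ j θ, |(∫ x, g j x ∂(Q₁ θ)) - ∫ x, g j x ∂(Q₂ θ)|
      ≤ δ * (2 * (1 - ε₀) ^ j) := by
    intro j θ
    set c : ℝ := 2 * (1 - ε₀) ^ j with hc
    have hcp : 0 < c := hcpos j
    have h1 : ∀ x, |g j x / c| ≤ 1 := fun x => by
      rw [abs_div, abs_of_pos hcp]
      exact (div_le_one hcp).2 (hgb j x)
    have h2 := hclose (fun x => g j x / c) ((hgm j).div_const c) h1 θ
    simp only [integral_div] at h2
    rw [div_sub_div_same, abs_div, abs_of_pos hcp, div_le_iff₀ hcp] at h2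
    linarith [h2]
  set a : ℕ → ℝ := fun j => ∫ θ, g j θ ∂π₂ with ha
  have hI : ∀ (Q : Kernel Θ Θ) (_ : IsMarkovKernel Q) (j : ℕ),
      Integrable (fun θ => ∫ x, g j x ∂(Q θ)) π₂ := by
    intro Q hQ j
    exact aux_integrable_of_bound (aux_measurable_kernel_integral Q (hgm j))
      (C := 2 * (1 - ε₀) ^ j) (fun θ => aux_abs_integral_le (hgb j))
  have hstep : ∀ j, a (j + 1) - a j
      = ∫ θ, ((∫ x, g j x ∂(Q₁ θ)) - ∫ x, g j x ∂(Q₂ θ)) ∂π₂ := by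
    intro j
    have e1 : a (j + 1) = ∫ θ, (∫ x, g j x ∂(Q₁ θ)) ∂π₂ :=
      integral_congr_ae (Filter.Eventually.of_forall fun θ => (hstep1 j θ).symm)
    have e2 : a j = ∫ θ, (∫ x, g j x ∂(Q₂ θ)) ∂π₂ := by
      conv_lhs => rw [ha]; rw [← hinv₂]
      exact aux_integral_bind π₂ Q₂ (hgm j) (hgb j)
    rw [e1, e2, ← integral_sub (hI Q₁ inferInstance j) (hI Q₂ inferInstance j)]
  have hstepbound : ∀ j, |a (j + 1) - a j| ≤ δ * (2 * (1 - ε₀) ^ j) := by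
    intro j
    rw [hstep j]
    exact aux_abs_integral_le (fun θ => key1 j θ)
  have ha0 : a 0 = c₂ - c₁ := by
    have hg0 : ∀ θ, g 0 θ = h θ - c₁ := fun θ => by
      show (∫ x, h x ∂(iterKernel Q₁ 0 θ)) - c₁ = h θ - c₁
      rw [show iterKernel Q₁ 0 = Kernel.id from rfl, Kernel.id_apply,
        integral_dirac' h θ hm.stronglyMeasurable]
    calc a 0 = ∫ θ, g 0 θ ∂π₂ := rfl
      _ = ∫ θ, (h θ - c₁) ∂π₂ := integral_congr_ae (Filter.Eventually.of_forall hg0)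
      _ = c₂ - c₁ := by
          rw [integral_sub (aux_integrable_of_bound hm hb) (integrable_const c₁),
            integral_const]
          simp [hc₂]
  have han : ∀ n, |a n| ≤ 2 * (1 - ε₀) ^ n := fun n => aux_abs_integral_le (hgb n)
  have hgeom : ∀ n, ∑ j ∈ Finset.range n, (1 - ε₀) ^ j ≤ 1 / ε₀ := by
    intro n
    rw [geom_sum_eq (by linarith : (1 : ℝ) - ε₀ ≠ 1),
      show (1 : ℝ) - ε₀ - 1 = -ε₀ by ring, div_neg, ← neg_div, neg_sub]
    have hpn : (0 : ℝ) ≤ (1 - ε₀) ^ n := pow_nonneg hr0 n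
    gcongr
    linarith
  have hsum : ∀ n, ∑ j ∈ Finset.range n, (δ * (2 * (1 - ε₀) ^ j)) ≤ (2 / ε₀) * δ := by
    intro n
    have e : ∑ j ∈ Finset.range n, (δ * (2 * (1 - ε₀) ^ j))
        = 2 * δ * ∑ j ∈ Finset.range n, (1 - ε₀) ^ j := by
      rw [Finset.mul_sum]
      exact Finset.sum_congr rfl fun j _ => by ring
    rw [e]
    calc 2 * δ * ∑ j ∈ Finset.range n, (1 - ε₀) ^ j
        ≤ 2 * δ * (1 / ε₀) := by
          apply mul_le_mul_of_nonneg_left (hgeom n) (by linarith)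
      _ = (2 / ε₀) * δ := by ring
  have hmain : ∀ n, |c₁ - c₂| ≤ 2 * (1 - ε₀) ^ n + (2 / ε₀) * δ := by
    intro n
    have htel : a n - a 0 = ∑ j ∈ Finset.range n, (a (j + 1) - a j) :=
      (Finset.sum_range_sub a n).symm
    have habs : |a n - a 0| ≤ (2 / ε₀) * δ := by
      rw [htel]
      calc |∑ j ∈ Finset.range n, (a (j + 1) - a j)|
          ≤ ∑ j ∈ Finset.range n, |a (j + 1) - a j| :=
            Finset.abs_sum_le_sum_abs _ _
        _ ≤ ∑ j ∈ Finset.range n, (δ * (2 * (1 - ε₀) ^ j)) :=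
            Finset.sum_le_sum fun j _ => hstepbound j
        _ ≤ (2 / ε₀) * δ := hsum n
    have e : c₁ - c₂ = (a n - a 0) - a n := by rw [ha0]; ring
    calc |c₁ - c₂| = |(a n - a 0) - a n| := by rw [e]
      _ ≤ |a n - a 0| + |a n| := abs_sub _ _
      _ ≤ (2 / ε₀) * δ + 2 * (1 - ε₀) ^ n := add_le_add habs (han n)
      _ = 2 * (1 - ε₀) ^ n + (2 / ε₀) * δ := by ring
  have hlim : Filter.Tendsto (fun n : ℕ => 2 * (1 - ε₀) ^ n + (2 / ε₀) * δ)
      Filter.atTop (nhds ((2 / ε₀) * δ)) := by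
    have h0 : Filter.Tendsto (fun n : ℕ => (1 - ε₀) ^ n) Filter.atTop (nhds 0) :=
      tendsto_pow_atTop_nhds_zero_of_lt_one hr0 hr1
    have h1 := h0.const_mul (2 : ℝ)
    have h2 := h1.add_const ((2 / ε₀) * δ)
    simpa using h2
  exact ge_of_tendsto' hlim hmain
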